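/- Let (x₁, y₁), …, (x_n, y_n) and (x̃₁, y₁), …, (x̃_n, y_n) be two linearly separable samples in ℝ^d with the same labels y_i ∈ {0,1} and margins λ and λ̃, respectively. If min over pairs i,j with y_i ≠ y_j of (‖x̃_i − x̃_j‖² − ‖x_i − x_j‖²) is strictly larger than max over pairs with y_i = y_j of (‖x̃_i − x̃_j‖² − ‖x_i − x_j‖²) — i.e., the minimum increase in squared distances between classes strictly exceeds the maximum increase in squared distances within each class — then λ̃ > λ. -/

import Mathlib

open Finset in
lemma cross_sum {E : Type*} [NormedAddCommGroup E] [InnerProductSpace ℝ E] {ι κ : Type*}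
    (P : Finset ι) (N : Finset κ) (a : ι → ℝ) (b : κ → ℝ) (z : ι → E) (w : κ → E) :
    ∑ i ∈ P, ∑ j ∈ N, a i * b j * ‖z i - w j‖^2 =
      (∑ j ∈ N, b j) * (∑ i ∈ P, a i * ‖z i‖^2) + (∑ i ∈ P, a i) * (∑ j ∈ N, b j * ‖w j‖^2)
      - 2 * (inner ℝ (∑ i ∈ P, a i • z i) (∑ j ∈ N, b j • w j) : ℝ) := by
  simp only [sum_inner, inner_sum, real_inner_smul_left, real_inner_smul_right,
    Finset.mul_sum, Finset.sum_mul]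
  have h : ∀ i j, a i * b j * ‖z i - w j‖^2
      = b j * (a i * ‖z i‖^2) + a i * (b j * ‖w j‖^2)
        - 2 * (b j * (a i * (inner ℝ (z i) (w j) : ℝ))) := fun i j => by
    rw [@norm_sub_sq_real]; ring
  simp only [h, Finset.sum_add_distrib, Finset.sum_sub_distrib]
  congr 1
  · congr 1
    exact Finset.sum_comm
  · exact Finset.sum_comm

lemma key_identity {E : Type*} [NormedAddCommGroup E] [InnerProductSpace ℝ E] {ι : Type*}
    (P N : Finset ι) (a b : ι → ℝ) (z : ι → E)
    (ha : ∑ i ∈ P, a i = 1) (hb : ∑ j ∈ N, b j = 1) :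
    ‖(∑ i ∈ P, a i • z i) - (∑ j ∈ N, b j • z j)‖^2 =
      (∑ i ∈ P, ∑ j ∈ N, a i * b j * ‖z i - z j‖^2)
      - (1/2) * (∑ i ∈ P, ∑ j ∈ P, a i * a j * ‖z i - z j‖^2)
      - (1/2) * (∑ i ∈ N, ∑ j ∈ N, b i * b j * ‖z i - z j‖^2) := by
  have h1 := cross_sum P N a b z z
  have h2 := cross_sum P P a a z z
  have h3 := cross_sum N N b b z z
  rw [ha] at h1 h2; rw [hb] at h1 h3
  have hu : (inner ℝ ((∑ i ∈ P, a i • z i)) ((∑ i ∈ P, a i • z i)) : ℝ)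
      = ‖(∑ i ∈ P, a i • z i)‖^2 := real_inner_self_eq_norm_sq _
  have hv : (inner ℝ ((∑ j ∈ N, b j • z j)) ((∑ j ∈ N, b j • z j)) : ℝ)
      = ‖(∑ j ∈ N, b j • z j)‖^2 := real_inner_self_eq_norm_sq _
  have hexp : ‖(∑ i ∈ P, a i • z i) - (∑ j ∈ N, b j • z j)‖^2
      = ‖(∑ i ∈ P, a i • z i)‖^2
        - 2 * (inner ℝ ((∑ i ∈ P, a i • z i)) ((∑ j ∈ N, b j • z j)) : ℝ)
        + ‖(∑ j ∈ N, b j • z j)‖^2 := by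
    rw [@norm_sub_sq_real]
  rw [hexp, h1, h2, h3, hu, hv]; ring

lemma sum2_const {ι κ : Type*} (P : Finset ι) (N : Finset κ) (w : ι → ℝ) (v : κ → ℝ) (c : ℝ)
    (hw : ∑ i ∈ P, w i = 1) (hv : ∑ j ∈ N, v j = 1) :
    ∑ i ∈ P, ∑ j ∈ N, w i * v j * c = c := by
  have h : ∀ i ∈ P, ∑ j ∈ N, w i * v j * c = w i * c := by
    intro i _
    calc ∑ j ∈ N, w i * v j * c = ∑ j ∈ N, (w i * c) * v j :=
          Finset.sum_congr rfl fun j _ => by ring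
      _ = (w i * c) * ∑ j ∈ N, v j := by rw [Finset.mul_sum]
      _ = w i * c := by rw [hv, mul_one]
  rw [Finset.sum_congr rfl h, ← Finset.sum_mul, hw, one_mul]

lemma core_ineq {E : Type*} [NormedAddCommGroup E] [InnerProductSpace ℝ E] {ι : Type*}
    (P N : Finset ι) (w v : ι → ℝ) (x xt : ι → E)
    (hw0 : ∀ i ∈ P, 0 ≤ w i) (hv0 : ∀ j ∈ N, 0 ≤ v j)
    (hw1 : ∑ i ∈ P, w i = 1) (hv1 : ∑ j ∈ N, v j = 1) (c : ℝ)
    (hbetween : ∀ i ∈ P, ∀ j ∈ N, c ≤ ‖xt i - xt j‖^2 - ‖x i - x j‖^2)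
    (hwithinP : ∀ i ∈ P, ∀ j ∈ P, ‖xt i - xt j‖^2 - ‖x i - x j‖^2 < c)
    (hwithinN : ∀ i ∈ N, ∀ j ∈ N, ‖xt i - xt j‖^2 - ‖x i - x j‖^2 < c) :
    ‖(∑ i ∈ P, w i • x i) - (∑ j ∈ N, v j • x j)‖^2 <
      ‖(∑ i ∈ P, w i • xt i) - (∑ j ∈ N, v j • xt j)‖^2 := by
  -- a positive weight exists in P
  obtain ⟨i0, hi0P, hi0pos⟩ : ∃ i ∈ P, (0:ℝ) < w i := by
    have : ∑ i ∈ P, (0:ℝ) < ∑ i ∈ P, w i := by rw [hw1]; simp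
    obtain ⟨i, hi, h⟩ := Finset.exists_lt_of_sum_lt this
    exact ⟨i, hi, h⟩
  have hcpos : 0 < c := by
    have := hwithinP i0 hi0P i0 hi0P
    simpa using this
  -- bound the between-class double sum from below
  have B1 : c ≤ ∑ i ∈ P, ∑ j ∈ N, w i * v j * (‖xt i - xt j‖^2 - ‖x i - x j‖^2) := by
    rw [← sum2_const P N w v c hw1 hv1]
    refine Finset.sum_le_sum fun i hi => Finset.sum_le_sum fun j hj => ?_
    exact mul_le_mul_of_nonneg_left (hbetween i hi j hj)
      (mul_nonneg (hw0 i hi) (hv0 j hj))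
  -- bound the within-class double sums
  have B2 : ∑ i ∈ P, ∑ j ∈ P, w i * w j * (‖xt i - xt j‖^2 - ‖x i - x j‖^2) < c := by
    have hprod : ∑ p ∈ P ×ˢ P, w p.1 * w p.2 * (‖xt p.1 - xt p.2‖^2 - ‖x p.1 - x p.2‖^2)
        < ∑ p ∈ P ×ˢ P, w p.1 * w p.2 * c := by
      refine Finset.sum_lt_sum (fun p hp => ?_) ⟨(i0, i0), Finset.mk_mem_product hi0P hi0P, ?_⟩
      · obtain ⟨h1, h2⟩ := Finset.mem_product.mp hp
        exact mul_le_mul_of_nonneg_left (le_of_lt (hwithinP _ h1 _ h2))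
          (mul_nonneg (hw0 _ h1) (hw0 _ h2))
      · simp only [sub_self, norm_zero]
        have : (0:ℝ) < w i0 * w i0 * c := by positivity
        simpa using this
    rw [Finset.sum_product, Finset.sum_product] at hprod
    calc ∑ i ∈ P, ∑ j ∈ P, w i * w j * (‖xt i - xt j‖^2 - ‖x i - x j‖^2)
        < ∑ i ∈ P, ∑ j ∈ P, w i * w j * c := hprod
      _ = c := sum2_const P P w w c hw1 hw1
  have B3 : ∑ i ∈ N, ∑ j ∈ N, v i * v j * (‖xt i - xt j‖^2 - ‖x i - x j‖^2) ≤ c := by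
    rw [← sum2_const N N v v c hv1 hv1]
    refine Finset.sum_le_sum fun i hi => Finset.sum_le_sum fun j hj => ?_
    exact mul_le_mul_of_nonneg_left (le_of_lt (hwithinN i hi j hj))
      (mul_nonneg (hv0 i hi) (hv0 j hj))
  -- split the difference sums
  have split : ∀ (Q R : Finset ι) (aa bb : ι → ℝ),
      ∑ i ∈ Q, ∑ j ∈ R, aa i * bb j * (‖xt i - xt j‖^2 - ‖x i - x j‖^2)
        = (∑ i ∈ Q, ∑ j ∈ R, aa i * bb j * ‖xt i - xt j‖^2)
          - (∑ i ∈ Q, ∑ j ∈ R, aa i * bb j * ‖x i - x j‖^2) := by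
    intro Q R aa bb
    rw [← Finset.sum_sub_distrib]
    refine Finset.sum_congr rfl fun i _ => ?_
    rw [← Finset.sum_sub_distrib]
    exact Finset.sum_congr rfl fun j _ => by ring
  rw [split P N w v] at B1
  rw [split P P w w] at B2
  rw [split N N v v] at B3
  rw [key_identity P N w v x hw1 hv1, key_identity P N w v xt hw1 hv1]
  linarith
lemma exists_weights {E : Type*} [AddCommGroup E] [Module ℝ E] {ι : Type*} (P : Finset ι)
    (f : ι → E) (p : E) (hp : p ∈ convexHull ℝ (f '' ↑P)) :
    ∃ w : ι → ℝ, (∀ i ∈ P, 0 ≤ w i) ∧ ∑ i ∈ P, w i = 1 ∧ ∑ i ∈ P, w i • f i = p := by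
  classical
  rw [convexHull_eq] at hp
  obtain ⟨ι', t, w, z, hw0, hw1, hz, hcm⟩ := hp
  have hgex : ∀ i ∈ t, ∃ k, k ∈ P ∧ f k = z i := by
    intro i hi
    obtain ⟨k, hk, hfk⟩ := hz i hi
    exact ⟨k, hk, hfk⟩
  have hPne : P.Nonempty := by
    rcases t.eq_empty_or_nonempty with h | ⟨i0, hi0⟩
    · simp [h] at hw1
    · obtain ⟨k, hk, _⟩ := hgex i0 hi0; exact ⟨k, hk⟩
  obtain ⟨k0, hk0⟩ := hPne
  set g : ι' → ι := fun i => if h : ∃ k, k ∈ P ∧ f k = z i then h.choose else k0 with hg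
  have hgP : ∀ i ∈ t, g i ∈ P := by
    intro i hi
    have h := hgex i hi
    simp only [hg, dif_pos h]
    exact h.choose_spec.1
  have hgf : ∀ i ∈ t, f (g i) = z i := by
    intro i hi
    have h := hgex i hi
    simp only [hg, dif_pos h]
    exact h.choose_spec.2
  refine ⟨fun k => ∑ i ∈ t.filter (fun i => g i = k), w i, ?_, ?_, ?_⟩
  · intro k _
    exact Finset.sum_nonneg fun i hi => hw0 i (Finset.mem_filter.mp hi).1
  · rw [Finset.sum_fiberwise_of_maps_to hgP, hw1]
  · have : ∀ k ∈ P, (∑ i ∈ t.filter (fun i => g i = k), w i) • f k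
        = ∑ i ∈ t.filter (fun i => g i = k), w i • z i := by
      intro k _
      rw [Finset.sum_smul]
      refine Finset.sum_congr rfl fun i hi => ?_
      obtain ⟨hit, hgi⟩ := Finset.mem_filter.mp hi
      rw [← hgi, hgf i hit]
    rw [Finset.sum_congr rfl this, Finset.sum_fiberwise_of_maps_to hgP,
      ← Finset.centerMass_eq_of_sum_1 t z hw1, hcm]

noncomputable section

/-- Given two linearly separable samples on the same labels with margins
`λ` and `λ̃` (half the distance between the convex hulls of the two classes), if the minimum
increase of squared distances between the classes strictly exceeds the maximum increase of
squared distances within the classes, then `λ̃ > λ`. -/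
theorem margin_increase (d n : ℕ) (x xt : Fin n → EuclideanSpace ℝ (Fin d))
    (y : Fin n → Bool) (lam lamt : ℝ)
    (h1 : ∃ i, y i = true) (h0 : ∃ i, y i = false)
    (hlam : lam = (1 / 2) * sInf (Set.image2 dist
        (convexHull ℝ (x '' {i | y i = true})) (convexHull ℝ (x '' {i | y i = false}))))
    (hlamt : lamt = (1 / 2) * sInf (Set.image2 dist
        (convexHull ℝ (xt '' {i | y i = true})) (convexHull ℝ (xt '' {i | y i = false}))))
    (hsep : 0 < lam) (hsept : 0 < lamt)
    (hcond : ∀ i j k l : Fin n, y i ≠ y j → y k = y l →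
      dist (xt k) (xt l) ^ 2 - dist (x k) (x l) ^ 2 <
        dist (xt i) (xt j) ^ 2 - dist (x i) (x j) ^ 2) :
    lam < lamt := by
  classical
  set P : Finset (Fin n) := Finset.univ.filter (fun i => y i = true) with hP
  set N : Finset (Fin n) := Finset.univ.filter (fun i => y i = false) with hN
  have hPset : {i | y i = true} = (↑P : Set (Fin n)) := by ext i; simp [hP]
  have hNset : {i | y i = false} = (↑N : Set (Fin n)) := by ext i; simp [hN]
  rw [hPset, hNset] at hlam hlamt
  set At := convexHull ℝ (xt '' (↑P : Set (Fin n))) with hAt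
  set Bt := convexHull ℝ (xt '' (↑N : Set (Fin n))) with hBt
  obtain ⟨i1, hi1⟩ := h1
  obtain ⟨j1, hj1⟩ := h0
  have hi1P : i1 ∈ P := by simp [hP, hi1]
  have hj1N : j1 ∈ N := by simp [hN, hj1]
  have hAtne : At.Nonempty := ⟨xt i1, subset_convexHull ℝ _ ⟨i1, by simpa using hi1P, rfl⟩⟩
  have hBtne : Bt.Nonempty := ⟨xt j1, subset_convexHull ℝ _ ⟨j1, by simpa using hj1N, rfl⟩⟩
  have hAtc : IsCompact At := (Set.toFinite _).isCompact_convexHull ℝ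
  have hBtc : IsCompact Bt := (Set.toFinite _).isCompact_convexHull ℝ
  obtain ⟨⟨at', bt'⟩, hmem, hmin⟩ := (hAtc.prod hBtc).exists_isMinOn (hAtne.prod hBtne)
    (continuous_fst.dist continuous_snd).continuousOn
  have hat : at' ∈ At := hmem.1
  have hbt : bt' ∈ Bt := hmem.2
  have hlamt_ge : dist at' bt' ≤ 2 * lamt := by
    rw [hlamt]
    have : dist at' bt' ≤ sInf (Set.image2 dist At Bt) := by
      apply le_csInf ⟨dist at' bt', Set.mem_image2_of_mem hat hbt⟩
      rintro r ⟨u, hu, v', hv', rfl⟩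
      exact isMinOn_iff.mp hmin (u, v') (Set.mk_mem_prod hu hv')
    linarith
  obtain ⟨w, hw0, hw1, hwx⟩ := exists_weights P xt at' hat
  obtain ⟨v, hv0, hv1, hvx⟩ := exists_weights N xt bt' hbt
  set a := ∑ i ∈ P, w i • x i with ha
  set b := ∑ j ∈ N, v j • x j with hb
  have haA : a ∈ convexHull ℝ (x '' (↑P : Set (Fin n))) := by
    rw [ha, ← Finset.centerMass_eq_of_sum_1 P x hw1]
    exact Finset.centerMass_mem_convexHull P hw0 (by rw [hw1]; norm_num)
      (fun i hi => ⟨i, by simpa using hi, rfl⟩)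
  have hbB : b ∈ convexHull ℝ (x '' (↑N : Set (Fin n))) := by
    rw [hb, ← Finset.centerMass_eq_of_sum_1 N x hv1]
    exact Finset.centerMass_mem_convexHull N hv0 (by rw [hv1]; norm_num)
      (fun j hj => ⟨j, by simpa using hj, rfl⟩)
  have hlam_le : 2 * lam ≤ dist a b := by
    rw [hlam]
    have hbdd : BddBelow (Set.image2 dist (convexHull ℝ (x '' (↑P : Set (Fin n))))
        (convexHull ℝ (x '' (↑N : Set (Fin n))))) := by
      refine ⟨0, ?_⟩
      rintro r ⟨u, _, v', _, rfl⟩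
      exact dist_nonneg
    have := csInf_le hbdd (Set.mem_image2_of_mem haA hbB)
    linarith
  -- the key strict inequality
  have hcond' : ∀ i j k l : Fin n, y i ≠ y j → y k = y l →
      ‖xt k - xt l‖ ^ 2 - ‖x k - x l‖ ^ 2 < ‖xt i - xt j‖ ^ 2 - ‖x i - x j‖ ^ 2 := by
    simpa only [dist_eq_norm] using hcond
  obtain ⟨⟨i0, j0⟩, hij0, hminc⟩ := (P ×ˢ N).exists_min_image
    (fun p => ‖xt p.1 - xt p.2‖ ^ 2 - ‖x p.1 - x p.2‖ ^ 2)
    ⟨(i1, j1), Finset.mk_mem_product hi1P hj1N⟩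
  set c : ℝ := ‖xt i0 - xt j0‖ ^ 2 - ‖x i0 - x j0‖ ^ 2 with hc
  have hyP : ∀ i ∈ P, y i = true := fun i hi => by simpa [hP] using hi
  have hyN : ∀ j ∈ N, y j = false := fun j hj => by simpa [hN] using hj
  have hne : y i0 ≠ y j0 := by
    rw [hyP i0 (Finset.mem_product.mp hij0).1, hyN j0 (Finset.mem_product.mp hij0).2]
    simp
  have hbetween : ∀ i ∈ P, ∀ j ∈ N, c ≤ ‖xt i - xt j‖ ^ 2 - ‖x i - x j‖ ^ 2 :=
    fun i hi j hj => hminc (i, j) (Finset.mk_mem_product hi hj)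
  have hwithinP : ∀ i ∈ P, ∀ j ∈ P, ‖xt i - xt j‖ ^ 2 - ‖x i - x j‖ ^ 2 < c :=
    fun i hi j hj => hcond' i0 j0 i j hne (by rw [hyP i hi, hyP j hj])
  have hwithinN : ∀ i ∈ N, ∀ j ∈ N, ‖xt i - xt j‖ ^ 2 - ‖x i - x j‖ ^ 2 < c :=
    fun i hi j hj => hcond' i0 j0 i j hne (by rw [hyN i hi, hyN j hj])
  have hcore := core_ineq P N w v x xt hw0 hv0 hw1 hv1 c hbetween hwithinP hwithinN
  have hkey : dist a b < dist at' bt' := by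
    rw [← hwx, ← hvx, dist_eq_norm, dist_eq_norm]
    have h1 := norm_nonneg (a - b)
    have h2 := norm_nonneg ((∑ i ∈ P, w i • xt i) - (∑ j ∈ N, v j • xt j))
    rw [ha, hb] at *
    nlinarith [hcore]
  linarith

end
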